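/- For every d ≥ 1, every integer n ≥ 1, every σ ∈ {E,O}^d, and every real polynomial f in d variables of total degree at most 2n−1, the cubature formula ∫_{[−1,1]^d} f(x) W_d(x) dx = 2^{d−1} ( I^{σ_1}_n ⊗ ⋯ ⊗ I^{σ_d}_n f + I^{σ̃_1}_n ⊗ ⋯ ⊗ I^{σ̃_d}_n f ) holds. -/

import Mathlib

open Real MeasureTheory

/-- The endpoint weights `ε_j`: `1/2` for `j ∈ {0, n}` and `1` otherwise. -/
noncomputable def chebLobattoWeight (n j : ℕ) : ℝ :=
  if j = 0 ∨ j = n then 1 / 2 else 1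

/-- The `d`-fold tensor sum `I^{τ₁}_n ⊗ ⋯ ⊗ I^{τ_d}_n f`, where for each coordinate
`i` the one-dimensional functional `I^E_n` (if `τ i = true`) or `I^O_n`
(if `τ i = false`) is applied to the `i`-th variable of `f`;
`I^E_n g = (1/n) ∑_{0≤j≤n, j even} ε_j g(cos(jπ/n))` and
`I^O_n g = (1/n) ∑_{0≤j≤n, j odd} ε_j g(cos(jπ/n))`. -/
noncomputable def tensorCheb (d n : ℕ) (τ : Fin d → Bool)
    (f : MvPolynomial (Fin d) ℝ) : ℝ :=
  ∑ j ∈ Fintype.piFinset (fun i =>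
      (Finset.range (n + 1)).filter (fun k => if τ i then Even k else Odd k)),
    (∏ i, chebLobattoWeight n (j i) / (n : ℝ)) *
      MvPolynomial.eval (fun i => Real.cos ((j i : ℝ) * π / n)) f


open Finset

lemma geom_cos (n : ℕ) (hn : 1 ≤ n) (m : ℤ) (hm : ¬ ((2*n : ℤ) ∣ m)) :
    ∑ j ∈ range (2*n), Real.cos ((m : ℝ) * j * π / n) = 0 := by
  have hn0 : (n:ℝ) ≠ 0 := by positivity
  have hnc : (n : ℂ) ≠ 0 := by exact_mod_cast hn0
  have hπ : (π : ℂ) ≠ 0 := by exact_mod_cast Real.pi_ne_zero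
  have hz : ∀ j : ℕ, Real.cos ((m : ℝ) * j * π / n)
      = (Complex.exp ((m : ℝ) * π / n * Complex.I) ^ j).re := by
    intro j
    rw [← Complex.exp_nat_mul]
    have : (j : ℂ) * (((m:ℝ) : ℂ) * (π:ℂ) / (n:ℂ) * Complex.I)
        = (((m:ℝ) * j * π / n : ℝ) : ℂ) * Complex.I := by
      push_cast; ring
    rw [this, Complex.exp_ofReal_mul_I_re]
  simp_rw [hz]
  rw [← Complex.re_sum]
  set z : ℂ := Complex.exp ((m : ℝ) * π / n * Complex.I) with hzdef
  have hz1 : z ≠ 1 := by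
    rw [hzdef]
    intro h
    rw [Complex.exp_eq_one_iff] at h
    obtain ⟨k, hk⟩ := h
    apply hm
    push_cast at hk
    field_simp at hk
    have h4 : ((m:ℂ) - 2*n*k) * ((π:ℂ) * Complex.I) = 0 := by linear_combination ((π:ℂ) * Complex.I) * hk
    rcases mul_eq_zero.1 h4 with h5 | h5
    · refine ⟨k, ?_⟩
      have : (m:ℂ) = 2*n*k := by linear_combination h5
      exact_mod_cast this
    · exact absurd h5 (mul_ne_zero hπ Complex.I_ne_zero)
  have hzN : z ^ (2*n) = 1 := by
    rw [hzdef, ← Complex.exp_nat_mul]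
    have : ((2*n : ℕ) : ℂ) * (((m:ℝ):ℂ) * (π:ℂ) / (n:ℂ) * Complex.I)
        = (m : ℂ) * (2 * (π:ℂ) * Complex.I) := by
      push_cast
      field_simp
    rw [this]
    exact_mod_cast Complex.exp_int_mul_two_pi_mul_I m
  rw [geom_sum_eq hz1, hzN]
  simp

lemma trap_cos_zero (n : ℕ) (hn : 1 ≤ n) (m : ℤ) (hm : ¬ ((2*n : ℤ) ∣ m)) :
    ∑ j ∈ range (n+1), chebLobattoWeight n j * Real.cos ((m:ℝ) * j * π / n) = 0 := by
  have hgeom : ∑ j ∈ range (2*n), Real.cos ((m : ℝ) * j * π / n) = 0 := geom_cos n hn m hm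
  set c : ℕ → ℝ := fun j => Real.cos ((m:ℝ) * j * π / n) with hc
  have hn0 : (n:ℝ) ≠ 0 := by positivity
  have key : ∀ i : ℕ, i ≤ 2*n → c (2*n - i) = c i := by
    intro i hi
    simp only [hc]
    have : (m:ℝ) * ((2*n - i : ℕ) : ℝ) * π / n = (m:ℝ) * (2*π) - (m:ℝ) * i * π / n := by
      rw [Nat.cast_sub hi]
      push_cast
      field_simp
    rw [this]
    exact Real.cos_int_mul_two_pi_sub _ m
  have h1 : ∑ j ∈ range (2*n), c j = ∑ j ∈ range n, c j + ∑ j ∈ range n, c (n + j) := by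
    rw [two_mul, Finset.sum_range_add]
  have h2 : ∑ j ∈ range n, c (n + j) = ∑ j ∈ range n, c (j + 1) := by
    rw [← Finset.sum_range_reflect (fun j => c (n + j)) n]
    apply Finset.sum_congr rfl
    intro j hj
    have hj' : j < n := Finset.mem_range.1 hj
    have e1 : n + (n - 1 - j) = 2*n - (j+1) := by omega
    rw [e1, key (j+1) (by omega)]
  have h3 : ∑ j ∈ range n, c (j + 1) = ∑ j ∈ range (n+1), c j - c 0 := by
    rw [Finset.sum_range_succ' c n]
    ring
  have h4 : ∑ j ∈ range n, c j = ∑ j ∈ range (n+1), c j - c n := by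
    rw [Finset.sum_range_succ]
    ring
  have hfilter : (range (n+1)).filter (fun j => j = 0 ∨ j = n) = {0, n} := by
    ext j
    simp only [Finset.mem_filter, Finset.mem_range, Finset.mem_insert, Finset.mem_singleton]
    omega
  have h5 : 2 * ∑ j ∈ range (n+1), chebLobattoWeight n j * c j
      = 2 * ∑ j ∈ range (n+1), c j - c 0 - c n := by
    have hsp : ∑ j ∈ range (n+1), 2 * (chebLobattoWeight n j * c j)
        = ∑ j ∈ range (n+1), (2 * c j - (if j = 0 ∨ j = n then c j else 0)) := by
      apply Finset.sum_congr rfl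
      intro j _
      simp only [chebLobattoWeight]
      split <;> ring
    rw [Finset.mul_sum, hsp, Finset.sum_sub_distrib, ← Finset.sum_filter, hfilter,
      Finset.sum_pair (by omega : (0:ℕ) ≠ n), Finset.mul_sum]
    ring
  have h6 : ∑ j ∈ range (2*n), c j = 2 * ∑ j ∈ range (n+1), c j - c 0 - c n := by
    rw [h1, h2, h3, h4]; ring
  rw [hgeom] at h6
  linarith [h5, h6]

lemma cos_pow_exp (k : ℕ) (θ : ℝ) :
    (Real.cos θ)^k * 2^k
      = ∑ l ∈ range (k+1), (k.choose l : ℝ) * Real.cos ((2*(l:ℝ) - k) * θ) := by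
  have hC : (((Real.cos θ)^k * 2^k : ℝ) : ℂ)
      = ∑ l ∈ range (k+1), (k.choose l : ℂ)
          * Complex.exp ((((2*(l:ℝ) - k) * θ : ℝ)) * Complex.I) := by
    have h2c : ((2:ℂ) * Complex.cos θ)^k
        = (Complex.exp ((θ:ℂ) * Complex.I) + Complex.exp (-(θ:ℂ) * Complex.I))^k := by
      rw [Complex.two_cos]
    rw [add_pow] at h2c
    have hterm : ∀ l ∈ range (k+1),
        Complex.exp ((θ:ℂ) * Complex.I) ^ l * Complex.exp (-(θ:ℂ) * Complex.I) ^ (k - l)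
          * (k.choose l : ℂ)
        = (k.choose l : ℂ) * Complex.exp ((((2*(l:ℝ) - k) * θ : ℝ)) * Complex.I) := by
      intro l hl
      have hlk : l ≤ k := Nat.lt_succ_iff.mp (Finset.mem_range.1 hl)
      rw [← Complex.exp_nat_mul, ← Complex.exp_nat_mul, ← Complex.exp_add]
      rw [mul_comm]
      congr 2
      have hsub : ((k - l : ℕ) : ℂ) = (k : ℂ) - l := Nat.cast_sub hlk
      push_cast [hsub]
      ring
    rw [Finset.sum_congr rfl hterm] at h2c
    rw [← h2c, ← Complex.ofReal_cos]
    push_cast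
    ring
  have h := congrArg Complex.re hC
  rw [Complex.ofReal_re, Complex.re_sum] at h
  rw [h]
  apply Finset.sum_congr rfl
  intro l _
  rw [Complex.mul_re]
  simp only [Complex.natCast_re, Complex.natCast_im, Complex.exp_ofReal_mul_I_re, zero_mul,
    sub_zero]

lemma cos_pow_exp' (k : ℕ) (θ : ℝ) :
    (Real.cos θ)^k
      = (∑ l ∈ range (k+1),
          (k.choose l : ℝ) * Real.cos (((2*(l:ℤ) - k : ℤ) : ℝ) * θ)) / 2^k := by
  have h2 : ((2:ℝ)^k) ≠ 0 := by positivity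
  rw [eq_div_iff h2]
  have : ∀ l ∈ range (k+1), (k.choose l : ℝ) * Real.cos (((2*(l:ℤ) - k : ℤ) : ℝ) * θ)
      = (k.choose l : ℝ) * Real.cos ((2*(l:ℝ) - k) * θ) := by
    intro l _
    congr 2
    push_cast
    ring
  rw [Finset.sum_congr rfl this]
  have h := cos_pow_exp k θ
  linarith [h]

noncomputable def valk (k : ℕ) : ℝ :=
  (∑ l ∈ range (k+1), (k.choose l : ℝ) * (if 2*(l:ℤ) - k = 0 then 1 else 0)) / 2^k

lemma integral_cos_int (m : ℤ) :
    ∫ θ in (0:ℝ)..π, Real.cos ((m:ℝ)*θ) = if m = 0 then π else 0 := by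
  rcases eq_or_ne m 0 with h | h
  · simp [h, Real.pi_pos.le]
  · rw [if_neg h]
    have hm : ((m:ℝ)) ≠ 0 := by exact_mod_cast h
    rw [intervalIntegral.integral_comp_mul_left (f := Real.cos) hm]
    simp [Real.sin_int_mul_pi m]

lemma integral_cos_pow' (k : ℕ) :
    ∫ θ in (0:ℝ)..π, (Real.cos θ)^k = π * valk k := by
  simp_rw [cos_pow_exp' k]
  rw [intervalIntegral.integral_div]
  have hsum := intervalIntegral.integral_finset_sum (μ := volume) (a := (0:ℝ)) (b := π)
    (f := fun l (θ:ℝ) => (k.choose l : ℝ) * Real.cos (((2*(l:ℤ) - (k:ℤ) : ℤ) : ℝ) * θ))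
    (s := range (k+1))
    (fun l _ => (Continuous.intervalIntegrable (by fun_prop) 0 π))
  rw [hsum]
  unfold valk
  rw [mul_div_assoc', Finset.mul_sum]
  congr 1
  apply Finset.sum_congr rfl
  intro l _
  rw [intervalIntegral.integral_const_mul, integral_cos_int (2*(l:ℤ) - k)]
  split <;> ring

lemma sum_chebW (n : ℕ) (hn : 1 ≤ n) :
    ∑ j ∈ range (n+1), chebLobattoWeight n j = n := by
  have hfilter : (range (n+1)).filter (fun j => j = 0 ∨ j = n) = {0, n} := by
    ext j
    simp only [Finset.mem_filter, Finset.mem_range, Finset.mem_insert, Finset.mem_singleton]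
    omega
  have : ∀ j ∈ range (n+1), chebLobattoWeight n j
      = 1 - (if j = 0 ∨ j = n then (1:ℝ)/2 else 0) := by
    intro j _
    simp only [chebLobattoWeight]
    split <;> norm_num
  rw [Finset.sum_congr rfl this, Finset.sum_sub_distrib, ← Finset.sum_filter, hfilter,
    Finset.sum_pair (by omega : (0:ℕ) ≠ n)]
  simp
  push_cast
  ring

lemma T_eq (n : ℕ) (hn : 1 ≤ n) (m : ℤ) (hm : m.natAbs ≤ 2*n - 1) :
    ∑ j ∈ range (n+1), chebLobattoWeight n j * Real.cos ((m:ℝ)*j*π/n)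
      = if m = 0 then (n:ℝ) else 0 := by
  rcases eq_or_ne m 0 with h | h
  · rw [if_pos h, h]
    simp only [Int.cast_zero, zero_mul, zero_div, Real.cos_zero, mul_one]
    exact sum_chebW n hn
  · rw [if_neg h]
    apply trap_cos_zero n hn m
    intro hdvd
    have h2 : (2*n:ℤ) ≤ m.natAbs := by
      rw [← Int.abs_eq_natAbs]
      exact Int.le_of_dvd (abs_pos.mpr h) ((dvd_abs _ _).mpr hdvd)
    omega

lemma T_alt (n : ℕ) (hn : 1 ≤ n) (m : ℤ) (hm : m.natAbs ≤ n - 1) :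
    ∑ j ∈ range (n+1), chebLobattoWeight n j * ((-1:ℝ)^j * Real.cos ((m:ℝ)*j*π/n)) = 0 := by
  have hn0 : (n:ℝ) ≠ 0 := by positivity
  have key : ∀ j : ℕ, (-1:ℝ)^j * Real.cos ((m:ℝ)*j*π/n)
      = Real.cos ((((m+n:ℤ)):ℝ)*j*π/n) := by
    intro j
    have harg : (((m+n:ℤ)):ℝ)*j*π/n = (m:ℝ)*j*π/n + j*π := by
      push_cast
      field_simp
    rw [harg, Real.cos_add_nat_mul_pi, mul_comm]
  simp_rw [key]
  have hne : (m + n : ℤ) ≠ 0 := by omega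
  have hna : (m + n : ℤ).natAbs ≤ 2*n - 1 := by omega
  have := T_eq n hn (m+n) hna
  rw [if_neg hne] at this
  exact this


lemma quad_S (n : ℕ) (hn : 1 ≤ n) (k : ℕ) (hk : k ≤ 2*n - 1) :
    ∑ j ∈ range (n+1), chebLobattoWeight n j * (Real.cos ((j:ℝ)*π/n))^k
      = n * valk k := by
  have hn0 : (n:ℝ) ≠ 0 := by positivity
  have hterm : ∀ j ∈ range (n+1),
      chebLobattoWeight n j * (Real.cos ((j:ℝ)*π/n))^k
        = (∑ l ∈ range (k+1), chebLobattoWeight n j *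
            ((k.choose l : ℝ) * Real.cos (((2*(l:ℤ) - k : ℤ) : ℝ) * j * π / n))) / 2^k := by
    intro j _
    have harg : ∀ l : ℕ, (((2*(l:ℤ) - k : ℤ)):ℝ) * ((j:ℝ)*π/n) = (((2*(l:ℤ) - k : ℤ)):ℝ) * j * π / n :=
      fun l => by ring
    rw [cos_pow_exp' k ((j:ℝ)*π/n)]
    simp_rw [harg, Finset.sum_div, Finset.mul_sum]
    apply Finset.sum_congr rfl
    intro l _
    ring
  rw [Finset.sum_congr rfl hterm, ← Finset.sum_div, Finset.sum_comm]
  unfold valk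
  rw [mul_div_assoc', Finset.mul_sum]
  congr 1
  apply Finset.sum_congr rfl
  intro l hl
  have hlk : l ≤ k := Nat.lt_succ_iff.mp (Finset.mem_range.1 hl)
  have hsum : ∑ j ∈ range (n+1), chebLobattoWeight n j *
      ((k.choose l : ℝ) * Real.cos (((2*(l:ℤ) - k : ℤ) : ℝ) * j * π / n))
      = (k.choose l : ℝ) * ∑ j ∈ range (n+1), chebLobattoWeight n j *
          Real.cos (((2*(l:ℤ) - k : ℤ) : ℝ) * j * π / n) := by
    rw [Finset.mul_sum]
    apply Finset.sum_congr rfl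
    intro j _
    ring
  rw [hsum, T_eq n hn _ (by omega : (2*(l:ℤ) - k).natAbs ≤ 2*n - 1)]
  split <;> ring

lemma quad_D (n : ℕ) (hn : 1 ≤ n) (k : ℕ) (hk : k ≤ n - 1) :
    ∑ j ∈ range (n+1), chebLobattoWeight n j * ((-1:ℝ)^j * (Real.cos ((j:ℝ)*π/n))^k)
      = 0 := by
  have hn0 : (n:ℝ) ≠ 0 := by positivity
  have hterm : ∀ j ∈ range (n+1),
      chebLobattoWeight n j * ((-1:ℝ)^j * (Real.cos ((j:ℝ)*π/n))^k)
        = (∑ l ∈ range (k+1), ((k.choose l : ℝ)) * (chebLobattoWeight n j *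
            ((-1:ℝ)^j * Real.cos (((2*(l:ℤ) - k : ℤ) : ℝ) * j * π / n)))) / 2^k := by
    intro j _
    have harg : ∀ l : ℕ, (((2*(l:ℤ) - k : ℤ)):ℝ) * ((j:ℝ)*π/n) = (((2*(l:ℤ) - k : ℤ)):ℝ) * j * π / n :=
      fun l => by ring
    rw [cos_pow_exp' k ((j:ℝ)*π/n)]
    simp_rw [harg, Finset.sum_div, Finset.mul_sum]
    apply Finset.sum_congr rfl
    intro l _
    ring
  rw [Finset.sum_congr rfl hterm, ← Finset.sum_div, Finset.sum_comm]
  rw [div_eq_zero_iff]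
  left
  apply Finset.sum_eq_zero
  intro l hl
  have hlk : l ≤ k := Nat.lt_succ_iff.mp (Finset.mem_range.1 hl)
  rw [← Finset.mul_sum, T_alt n hn _ (by omega : (2*(l:ℤ) - k).natAbs ≤ n - 1), mul_zero]

lemma cos_image_Ioo : Real.cos '' Set.Ioo 0 π = Set.Ioo (-1 : ℝ) 1 := by
  ext y
  constructor
  · rintro ⟨θ, hθ, rfl⟩
    obtain ⟨h0, hπ⟩ := hθ
    constructor
    · have := Real.strictAntiOn_cos (Set.mem_Icc.mpr ⟨le_of_lt h0, le_of_lt hπ⟩)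
        (Set.right_mem_Icc.mpr Real.pi_pos.le) hπ
      simpa [Real.cos_pi] using this
    · have := Real.strictAntiOn_cos (Set.left_mem_Icc.mpr Real.pi_pos.le)
        (Set.mem_Icc.mpr ⟨le_of_lt h0, le_of_lt hπ⟩) h0
      simpa [Real.cos_zero] using this
  · intro hy
    obtain ⟨h1, h2⟩ := hy
    obtain ⟨θ, hθ, hcos⟩ := Real.surjOn_cos (Set.mem_Icc.mpr ⟨le_of_lt h1, le_of_lt h2⟩)
    refine ⟨θ, ?_, hcos⟩
    obtain ⟨hθ0, hθπ⟩ := Set.mem_Icc.mp hθ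
    constructor
    · rcases lt_or_eq_of_le hθ0 with h | h
      · exact h
      · exfalso; rw [← h, Real.cos_zero] at hcos; linarith
    · rcases lt_or_eq_of_le hθπ with h | h
      · exact h
      · exfalso; rw [h, Real.cos_pi] at hcos; linarith

lemma eqOn_cos_weight (k : ℕ) : ∀ θ ∈ Set.Ioo (0:ℝ) π,
    |(-Real.sin θ)| • ((Real.cos θ)^k * (π * Real.sqrt (1 - (Real.cos θ)^2))⁻¹)
      = (Real.cos θ)^k / π := by
  intro θ hθ
  obtain ⟨h0, hπ⟩ := hθ
  have hs : 0 < Real.sin θ := Real.sin_pos_of_pos_of_lt_pi h0 hπ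
  have h1 : 1 - (Real.cos θ)^2 = (Real.sin θ)^2 := by
    have := Real.sin_sq_add_cos_sq θ
    linarith
  rw [h1, Real.sqrt_sq hs.le, abs_neg, abs_of_pos hs]
  rw [smul_eq_mul]
  field_simp

lemma oneD_integral (k : ℕ) :
    ∫ x in Set.Ioo (-1:ℝ) 1, x^k * (π * Real.sqrt (1 - x^2))⁻¹ = valk k := by
  have hsub := integral_image_eq_integral_abs_deriv_smul (f := Real.cos)
    (f' := fun θ => -Real.sin θ) measurableSet_Ioo
    (fun θ _ => (Real.hasDerivAt_cos θ).hasDerivWithinAt)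
    (Real.injOn_cos.mono Set.Ioo_subset_Icc_self)
    (fun x => x^k * (π * Real.sqrt (1 - x^2))⁻¹)
  rw [cos_image_Ioo] at hsub
  rw [hsub]
  rw [setIntegral_congr_fun measurableSet_Ioo (eqOn_cos_weight k)]
  have : ∫ θ in Set.Ioo (0:ℝ) π, (Real.cos θ)^k / π
      = (∫ θ in Set.Ioo (0:ℝ) π, (Real.cos θ)^k) / π := integral_div π _
  rw [this, ← integral_Ioc_eq_integral_Ioo,
    ← intervalIntegral.integral_of_le Real.pi_pos.le, integral_cos_pow',
    mul_div_assoc, mul_comm]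
  field_simp

lemma oneD_integrable (k : ℕ) :
    IntegrableOn (fun x : ℝ => x^k * (π * Real.sqrt (1 - x^2))⁻¹) (Set.Ioo (-1:ℝ) 1) := by
  have hiff := integrableOn_image_iff_integrableOn_abs_deriv_smul (f := Real.cos)
    (f' := fun θ => -Real.sin θ) measurableSet_Ioo
    (fun θ _ => (Real.hasDerivAt_cos θ).hasDerivWithinAt)
    (Real.injOn_cos.mono Set.Ioo_subset_Icc_self)
    (fun x => x^k * (π * Real.sqrt (1 - x^2))⁻¹)
  rw [cos_image_Ioo] at hiff
  rw [hiff]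
  apply IntegrableOn.congr_fun ?_ (fun θ hθ => (eqOn_cos_weight k θ hθ).symm) measurableSet_Ioo
  have : IntegrableOn (fun θ : ℝ => (Real.cos θ)^k / π) (Set.Icc (0:ℝ) π) :=
    (Continuous.integrableOn_Icc (by fun_prop))
  exact this.mono_set Set.Ioo_subset_Icc_self

noncomputable def Qfun (n : ℕ) (b : Bool) (k : ℕ) : ℝ :=
  ∑ j ∈ (range (n+1)).filter (fun j => if b then Even j else Odd j),
    chebLobattoWeight n j / n * (Real.cos ((j:ℝ) * π / n))^k

lemma Q_add (n : ℕ) (hn : 1 ≤ n) (k : ℕ) (hk : k ≤ 2*n - 1) :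
    Qfun n true k + Qfun n false k = valk k := by
  have hn0 : (n:ℝ) ≠ 0 := by positivity
  unfold Qfun
  have hodd : (range (n+1)).filter (fun j => if false then Even j else Odd j)
      = (range (n+1)).filter (fun j => ¬ Even j) := by
    apply Finset.filter_congr
    intro j _
    simp only [Bool.false_eq_true, if_false, Nat.not_even_iff_odd]
  rw [hodd]
  have heven : (range (n+1)).filter (fun j => if true then Even j else Odd j)
      = (range (n+1)).filter (fun j => Even j) := by
    apply Finset.filter_congr
    intro j _
    simp
  rw [heven, Finset.sum_filter_add_sum_filter_not]
  have : ∀ j ∈ range (n+1), chebLobattoWeight n j / n * (Real.cos ((j:ℝ) * π / n))^k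
      = (chebLobattoWeight n j * (Real.cos ((j:ℝ) * π / n))^k) / n := by
    intro j _; ring
  rw [Finset.sum_congr rfl this, ← Finset.sum_div, quad_S n hn k hk]
  field_simp

lemma Q_sub (n : ℕ) (hn : 1 ≤ n) (k : ℕ) (hk : k ≤ n - 1) :
    Qfun n true k = Qfun n false k := by
  have hn0 : (n:ℝ) ≠ 0 := by positivity
  have hD := quad_D n hn k hk
  rw [← Finset.sum_filter_add_sum_filter_not (range (n+1)) (fun j => Even j)] at hD
  have he : ∀ j ∈ (range (n+1)).filter (fun j => Even j),
      chebLobattoWeight n j * ((-1:ℝ)^j * (Real.cos ((j:ℝ)*π/n))^k)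
      = n * (chebLobattoWeight n j / n * (Real.cos ((j:ℝ)*π/n))^k) := by
    intro j hj
    have : Even j := (Finset.mem_filter.1 hj).2
    rw [this.neg_one_pow]
    field_simp
  have ho : ∀ j ∈ (range (n+1)).filter (fun j => ¬ Even j),
      chebLobattoWeight n j * ((-1:ℝ)^j * (Real.cos ((j:ℝ)*π/n))^k)
      = -(n * (chebLobattoWeight n j / n * (Real.cos ((j:ℝ)*π/n))^k)) := by
    intro j hj
    have : Odd j := Nat.not_even_iff_odd.mp (Finset.mem_filter.1 hj).2
    rw [this.neg_one_pow]
    field_simp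
  rw [Finset.sum_congr rfl he, Finset.sum_congr rfl ho, ← Finset.mul_sum,
    Finset.sum_neg_distrib, ← Finset.mul_sum] at hD
  have hQe : Qfun n true k
      = ∑ j ∈ (range (n+1)).filter (fun j => Even j),
          chebLobattoWeight n j / n * (Real.cos ((j:ℝ)*π/n))^k := by
    unfold Qfun
    apply Finset.sum_congr ?_ (fun _ _ => rfl)
    apply Finset.filter_congr
    intro j _; simp
  have hQo : Qfun n false k
      = ∑ j ∈ (range (n+1)).filter (fun j => ¬ Even j),
          chebLobattoWeight n j / n * (Real.cos ((j:ℝ)*π/n))^k := by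
    unfold Qfun
    apply Finset.sum_congr ?_ (fun _ _ => rfl)
    apply Finset.filter_congr
    intro j _; simp only [Bool.false_eq_true, if_false, Nat.not_even_iff_odd]
  rw [hQe, hQo]
  have := hD
  have hcalc : (n:ℝ) * (∑ j ∈ (range (n+1)).filter (fun j => Even j),
      chebLobattoWeight n j / n * (Real.cos ((j:ℝ)*π/n))^k
    - ∑ j ∈ (range (n+1)).filter (fun j => ¬ Even j),
      chebLobattoWeight n j / n * (Real.cos ((j:ℝ)*π/n))^k) = 0 := by
    rw [mul_sub]; linarith [hD]
  rcases mul_eq_zero.1 hcalc with h | h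
  · exact absurd h hn0
  · linarith

lemma Q_half (n : ℕ) (hn : 1 ≤ n) (k : ℕ) (hk : k ≤ n - 1) (b : Bool) :
    Qfun n b k = valk k / 2 := by
  have h1 := Q_add n hn k (by omega)
  have h2 := Q_sub n hn k hk
  cases b
  · rw [← h2] at h1 ⊢; linarith
  · rw [h2] at h1 ⊢; linarith

lemma combo (d n : ℕ) (hd : 1 ≤ d) (hn : 1 ≤ n) (σ : Fin d → Bool) (v : Fin d → ℕ)
    (hv : ∑ i, v i ≤ 2*n - 1) :
    ∏ i, valk (v i)
      = 2 ^ (d - 1) * (∏ i, Qfun n (σ i) (v i) + ∏ i, Qfun n (!σ i) (v i)) := by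
  -- find i0 such that all other coordinates have degree ≤ n-1
  obtain ⟨i0, hi0⟩ : ∃ i0 : Fin d, ∀ i, i ≠ i0 → v i ≤ n - 1 := by
    by_cases h : ∃ i, n ≤ v i
    · obtain ⟨i0, hi0⟩ := h
      refine ⟨i0, fun i hi => ?_⟩
      by_contra hc
      push_neg at hc
      have h1 : v i0 + ∑ j ∈ Finset.univ.erase i0, v j = ∑ j, v j :=
        Finset.add_sum_erase _ _ (Finset.mem_univ i0)
      have h2 : v i ≤ ∑ j ∈ Finset.univ.erase i0, v j :=
        Finset.single_le_sum (fun _ _ => Nat.zero_le _)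
          (Finset.mem_erase.mpr ⟨hi, Finset.mem_univ i⟩)
      omega
    · push_neg at h
      exact ⟨⟨0, hd⟩, fun i _ => by have := h i; omega⟩
  have hvi0 : v i0 ≤ 2*n - 1 := by
    have : v i0 ≤ ∑ j, v j := Finset.single_le_sum (fun _ _ => Nat.zero_le _) (Finset.mem_univ i0)
    omega
  have hprod : ∀ τ : Fin d → Bool, ∏ i, Qfun n (τ i) (v i)
      = Qfun n (τ i0) (v i0) * ∏ i ∈ Finset.univ.erase i0, (valk (v i) / 2) := by
    intro τ
    rw [← Finset.mul_prod_erase _ _ (Finset.mem_univ i0)]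
    congr 1
    apply Finset.prod_congr rfl
    intro i hi
    exact Q_half n hn (v i) (hi0 i (Finset.mem_erase.1 hi).1) (τ i)
  rw [hprod σ, hprod (fun i => !σ i)]
  have hQQ : Qfun n (σ i0) (v i0) + Qfun n (!σ i0) (v i0) = valk (v i0) := by
    cases h : σ i0
    · rw [add_comm]; exact Q_add n hn _ hvi0
    · exact Q_add n hn _ hvi0
  have hcard : (Finset.univ.erase i0).card = d - 1 := by
    rw [Finset.card_erase_of_mem (Finset.mem_univ i0), Finset.card_univ, Fintype.card_fin]
  have herase : ∏ i ∈ Finset.univ.erase i0, (valk (v i) / 2)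
      = (∏ i ∈ Finset.univ.erase i0, valk (v i)) / 2^(d-1) := by
    rw [Finset.prod_div_distrib, Finset.prod_const, hcard]
  rw [herase, ← add_mul, hQQ]
  rw [← Finset.mul_prod_erase Finset.univ (fun i => valk (v i)) (Finset.mem_univ i0)]
  field_simp

lemma tensorCheb_monomial (d n : ℕ) (τ : Fin d → Bool) (v : Fin d →₀ ℕ) (c : ℝ) :
    tensorCheb d n τ (MvPolynomial.monomial v c) = c * ∏ i, Qfun n (τ i) (v i) := by
  unfold tensorCheb Qfun
  simp_rw [MvPolynomial.eval_monomial, Finsupp.prod_pow]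
  rw [Finset.prod_univ_sum, Finset.mul_sum]
  apply Finset.sum_congr rfl
  intro j _
  rw [Finset.prod_mul_distrib]
  ring

lemma tensorCheb_sum (d n : ℕ) (τ : Fin d → Bool) (f : MvPolynomial (Fin d) ℝ) :
    tensorCheb d n τ f
      = ∑ v ∈ f.support, tensorCheb d n τ (MvPolynomial.monomial v (f.coeff v)) := by
  unfold tensorCheb
  rw [Finset.sum_comm]
  apply Finset.sum_congr rfl
  intro j _
  conv_lhs => rw [MvPolynomial.as_sum f]
  rw [map_sum, Finset.mul_sum]

lemma indicator_pi_prod (d : ℕ) (g : Fin d → ℝ → ℝ) (x : Fin d → ℝ) :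
    (Set.univ.pi (fun _ : Fin d => Set.Ioo (-1:ℝ) 1)).indicator
        (fun x => ∏ i, g i (x i)) x
      = ∏ i, (Set.Ioo (-1:ℝ) 1).indicator (g i) (x i) := by
  by_cases hx : x ∈ Set.univ.pi (fun _ : Fin d => Set.Ioo (-1:ℝ) 1)
  · rw [Set.indicator_of_mem hx]
    exact Finset.prod_congr rfl fun i _ =>
      (Set.indicator_of_mem (hx i (Set.mem_univ i)) _).symm
  · rw [Set.indicator_of_notMem hx]
    rw [Set.mem_pi] at hx
    push_neg at hx
    obtain ⟨i, _, hxi⟩ := hx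
    symm
    apply Finset.prod_eq_zero (Finset.mem_univ i)
    rw [Set.indicator_of_notMem hxi]

lemma integrand_eq (d : ℕ) (v : Fin d →₀ ℕ) (c : ℝ) (x : Fin d → ℝ) :
    MvPolynomial.eval x (MvPolynomial.monomial v c) * ∏ i, (π * Real.sqrt (1 - (x i)^2))⁻¹
      = c * ∏ i, ((x i)^(v i) * (π * Real.sqrt (1 - (x i)^2))⁻¹) := by
  rw [MvPolynomial.eval_monomial, Finsupp.prod_pow, Finset.prod_mul_distrib]
  ring

lemma integrable_monomial (d : ℕ) (v : Fin d →₀ ℕ) (c : ℝ) :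
    IntegrableOn (fun x : Fin d → ℝ =>
        MvPolynomial.eval x (MvPolynomial.monomial v c) * ∏ i, (π * Real.sqrt (1 - (x i)^2))⁻¹)
      (Set.univ.pi (fun _ : Fin d => Set.Ioo (-1:ℝ) 1)) := by
  have hset : MeasurableSet (Set.univ.pi (fun _ : Fin d => Set.Ioo (-1:ℝ) 1)) :=
    MeasurableSet.univ_pi (fun _ => measurableSet_Ioo)
  rw [← integrable_indicator_iff hset]
  have hbase : Integrable (fun x : Fin d → ℝ =>
      ∏ i, (Set.Ioo (-1:ℝ) 1).indicator (fun t => t^(v i) * (π * Real.sqrt (1 - t^2))⁻¹) (x i)) :=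
    Integrable.fintype_prod (fun i =>
      (integrable_indicator_iff measurableSet_Ioo).mpr (oneD_integrable (v i)))
  apply (hbase.const_mul c).congr
  apply ae_of_all
  intro x
  show c * ∏ i, (Set.Ioo (-1:ℝ) 1).indicator
      (fun t => t^(v i) * (π * Real.sqrt (1 - t^2))⁻¹) (x i) = _
  rw [← indicator_pi_prod d (fun i t => t^(v i) * (π * Real.sqrt (1 - t^2))⁻¹) x,
    ← Set.indicator_const_mul]
  congr 1
  funext y
  rw [integrand_eq]

lemma integral_monomial (d : ℕ) (v : Fin d →₀ ℕ) (c : ℝ) :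
    ∫ x in Set.univ.pi (fun _ : Fin d => Set.Ioo (-1:ℝ) 1),
        MvPolynomial.eval x (MvPolynomial.monomial v c) * ∏ i, (π * Real.sqrt (1 - (x i)^2))⁻¹
      = c * ∏ i, valk (v i) := by
  have hset : MeasurableSet (Set.univ.pi (fun _ : Fin d => Set.Ioo (-1:ℝ) 1)) :=
    MeasurableSet.univ_pi (fun _ => measurableSet_Ioo)
  rw [← integral_indicator hset]
  have heq : ∀ x : Fin d → ℝ,
      (Set.univ.pi (fun _ : Fin d => Set.Ioo (-1:ℝ) 1)).indicator
        (fun x => MvPolynomial.eval x (MvPolynomial.monomial v c)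
          * ∏ i, (π * Real.sqrt (1 - (x i)^2))⁻¹) x
      = c * ∏ i, (Set.Ioo (-1:ℝ) 1).indicator
          (fun t => t^(v i) * (π * Real.sqrt (1 - t^2))⁻¹) (x i) := by
    intro x
    rw [← indicator_pi_prod d (fun i t => t^(v i) * (π * Real.sqrt (1 - t^2))⁻¹) x,
      ← Set.indicator_const_mul]
    congr 1
    funext y
    rw [integrand_eq]
  rw [integral_congr_ae (ae_of_all _ heq), MeasureTheory.integral_const_mul]
  congr 1
  rw [integral_fintype_prod_volume_eq_prod
    (f := fun i t => (Set.Ioo (-1:ℝ) 1).indicator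
      (fun t => t^(v i) * (π * Real.sqrt (1 - t^2))⁻¹) t)]
  apply Finset.prod_congr rfl
  intro i _
  rw [integral_indicator measurableSet_Ioo, oneD_integral]

/-- Theorem 2.2: for every `d ≥ 1`, `n ≥ 1`, every `σ ∈ {E,O}^d` (encoded as
`σ : Fin d → Bool`, `true = E`, `false = O`) and every real polynomial `f` in `d`
variables of total degree at most `2n - 1`,
`∫_{[-1,1]^d} f(x) W_d(x) dx = 2^{d-1} (I^{σ₁}_n ⊗ ⋯ ⊗ I^{σ_d}_n f +
I^{σ̃₁}_n ⊗ ⋯ ⊗ I^{σ̃_d}_n f)`, where `W_d(x) = π^{-d} ∏ᵢ (1 - xᵢ²)^{-1/2}` and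
`σ̃` interchanges `E` and `O` in every coordinate. -/
theorem cubature_chebyshev_cube (d : ℕ) (hd : 1 ≤ d) (n : ℕ) (hn : 1 ≤ n)
    (σ : Fin d → Bool) (f : MvPolynomial (Fin d) ℝ)
    (hf : f.totalDegree ≤ 2 * n - 1) :
    ∫ x in Set.univ.pi (fun _ : Fin d => Set.Ioo (-1 : ℝ) 1),
        MvPolynomial.eval x f * ∏ i, (π * Real.sqrt (1 - (x i) ^ 2))⁻¹ =
      2 ^ (d - 1) *
        (tensorCheb d n σ f + tensorCheb d n (fun i => ! σ i) f) := by
  have hLHS : ∫ x in Set.univ.pi (fun _ : Fin d => Set.Ioo (-1 : ℝ) 1),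
      MvPolynomial.eval x f * ∏ i, (π * Real.sqrt (1 - (x i) ^ 2))⁻¹
      = ∑ v ∈ f.support, (f.coeff v) * ∏ i, valk (v i) := by
    have heq : ∀ x : Fin d → ℝ,
        MvPolynomial.eval x f * ∏ i, (π * Real.sqrt (1 - (x i) ^ 2))⁻¹
        = ∑ v ∈ f.support, MvPolynomial.eval x (MvPolynomial.monomial v (f.coeff v))
            * ∏ i, (π * Real.sqrt (1 - (x i) ^ 2))⁻¹ := by
      intro x
      conv_lhs => rw [MvPolynomial.as_sum f]
      rw [map_sum, Finset.sum_mul]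
    rw [integral_congr_ae (ae_of_all _ heq),
      integral_finset_sum _ (fun v _ => integrable_monomial d v (f.coeff v))]
    exact Finset.sum_congr rfl fun v _ => integral_monomial d v (f.coeff v)
  rw [hLHS, tensorCheb_sum d n σ f, tensorCheb_sum d n (fun i => !σ i) f]
  simp_rw [tensorCheb_monomial]
  rw [← Finset.sum_add_distrib, Finset.mul_sum]
  apply Finset.sum_congr rfl
  intro v hv
  have hdeg : ∑ i, v i ≤ 2*n - 1 := by
    have h1 : (v.sum fun _ e => e) ≤ f.totalDegree := MvPolynomial.le_totalDegree hv
    have h2 : (v.sum fun _ e => e) = ∑ i, v i := Finsupp.sum_fintype _ _ (fun _ => rfl)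
    omega
  rw [combo d n hd hn σ (fun i => v i) hdeg]
  ring
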